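/- Let d ≥ 1, let 0 < r < π/4, let p₀ ∈ S^d, and let n ≥ 1. Let D = {x₁, …, xₙ} and D' = {x₁, …, x_{n−1}, xₙ'} be two datasets with all points in the geodesic ball B_r(p₀). Then for every x ∈ B_r(p₀), ‖(1/n)·Σ_{i=1}^{n} log_x x_i − (1/n)·(Σ_{i=1}^{n−1} log_x x_i + log_x xₙ')‖ ≤ (2r/n)·(2 − 2r·cot(2r)), where cot t = cos t / sin t. -/

import Mathlib

open Real


/-- Geodesic distance on the unit sphere `S^d ⊂ ℝ^(d+1)`: `ρ(p,q) = arccos ⟨p,q⟩`. -/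
noncomputable def sphDist {d : ℕ} (p q : EuclideanSpace ℝ (Fin (d + 1))) : ℝ :=
  Real.arccos (inner ℝ p q)

/-- Inverse exponential (log) map on the unit sphere:
`log_p q = (θ / sin θ) (q - cos θ • p)` with `θ = ρ(p,q)` (and `log_p p = 0`,
which the formula yields since `0/0 = 0` in Lean). -/
noncomputable def sphLog {d : ℕ} (p q : EuclideanSpace ℝ (Fin (d + 1))) :
    EuclideanSpace ℝ (Fin (d + 1)) :=
  (sphDist p q / Real.sin (sphDist p q)) • (q - Real.cos (sphDist p q) • p)



lemma my_sin_lower {x : ℝ} (hx : 0 ≤ x) : x - x ^ 3 / 6 ≤ Real.sin x := by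
  have hmono : Monotone (fun x : ℝ => Real.sin x - (x - x ^ 3 / 6)) := by
    apply monotone_of_deriv_nonneg
    · fun_prop
    · intro t
      have hd : HasDerivAt (fun x : ℝ => Real.sin x - (x - x ^ 3 / 6))
          (Real.cos t - (1 - 3 * t ^ 2 / 6)) t := by
        have := (Real.hasDerivAt_sin t).sub
          ((hasDerivAt_id t).sub (((hasDerivAt_pow 3 t).div_const 6)))
        simpa [Pi.sub_def, Pi.add_def] using this
      rw [hd.deriv]
      nlinarith [Real.one_sub_sq_div_two_le_cos (x := t)]
  have := hmono hx
  simpa using this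

lemma my_cos_upper {x : ℝ} (hx : 0 ≤ x) : Real.cos x ≤ 1 - x ^ 2 / 2 + x ^ 4 / 24 := by
  have hmono : MonotoneOn (fun x : ℝ => (1 - x ^ 2 / 2 + x ^ 4 / 24) - Real.cos x) (Set.Ici 0) := by
    apply monotoneOn_of_deriv_nonneg (convex_Ici 0)
    · fun_prop
    · fun_prop
    · intro t ht
      rw [interior_Ici] at ht
      have hd : HasDerivAt (fun x : ℝ => (1 - x ^ 2 / 2 + x ^ 4 / 24) - Real.cos x)
          ((0 - 2 * t / 2 + 4 * t ^ 3 / 24) - (-Real.sin t)) t := by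
        have := (((hasDerivAt_const t (1:ℝ)).sub ((hasDerivAt_pow 2 t).div_const 2)).add
          ((hasDerivAt_pow 4 t).div_const 24)).sub (Real.hasDerivAt_cos t)
        simpa [Pi.sub_def, Pi.add_def] using this
      rw [hd.deriv]
      have := my_sin_lower (le_of_lt ht)
      nlinarith
  have := hmono (Set.self_mem_Ici) (by exact hx) hx
  simpa using this

lemma my_sin_upper {x : ℝ} (hx : 0 ≤ x) : Real.sin x ≤ x - x ^ 3 / 6 + x ^ 5 / 120 := by
  have hmono : MonotoneOn (fun x : ℝ => (x - x ^ 3 / 6 + x ^ 5 / 120) - Real.sin x) (Set.Ici 0) := by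
    apply monotoneOn_of_deriv_nonneg (convex_Ici 0)
    · fun_prop
    · fun_prop
    · intro t ht
      rw [interior_Ici] at ht
      have hd : HasDerivAt (fun x : ℝ => (x - x ^ 3 / 6 + x ^ 5 / 120) - Real.sin x)
          ((1 - 3 * t ^ 2 / 6 + 5 * t ^ 4 / 120) - Real.cos t) t := by
        have := (((hasDerivAt_id t).sub ((hasDerivAt_pow 3 t).div_const 6)).add
          ((hasDerivAt_pow 5 t).div_const 120)).sub (Real.hasDerivAt_sin t)
        simpa [Pi.sub_def, Pi.add_def] using this
      rw [hd.deriv]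
      have := my_cos_upper (le_of_lt ht)
      nlinarith
  have := hmono (Set.self_mem_Ici) (by exact hx) hx
  simpa using this

/-- key scalar inequality: `T sin T + T² cos T ≤ 2 sin² T` on `(0, π/2)`. -/
lemma key_scalar {T : ℝ} (h0 : 0 < T) (h2 : T < Real.pi / 2) :
    T * Real.sin T + T ^ 2 * Real.cos T ≤ 2 * Real.sin T ^ 2 := by
  have hT2 : T < 1.58 := by
    have := Real.pi_lt_d2
    linarith
  have h1 := my_sin_lower h0.le
  have h2' := my_sin_upper h0.le
  have h3 := my_cos_upper h0.le
  have h4 : 0 ≤ T - T ^ 3 / 6 := by nlinarith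
  nlinarith [sq_nonneg (Real.sin T - (T - T^3/6)), sq_nonneg T, sq_nonneg (T^3),
    mul_le_mul_of_nonneg_left h1 h0.le, sq_nonneg (T - T^3/6), pow_pos h0 6]


section Geo
variable {d : ℕ}
local notation "E" => EuclideanSpace ℝ (Fin (d + 1))

lemma inner_le_one {p q : E} (hp : ‖p‖ = 1) (hq : ‖q‖ = 1) : (inner ℝ p q : ℝ) ≤ 1 := by
  have := real_inner_le_norm p q
  rw [hp, hq] at this; linarith

lemma neg_one_le_inner {p q : E} (hp : ‖p‖ = 1) (hq : ‖q‖ = 1) : (-1 : ℝ) ≤ inner ℝ p q := by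
  have := abs_real_inner_le_norm p q
  rw [hp, hq] at this
  have := abs_le.mp (by linarith : |(inner ℝ p q : ℝ)| ≤ 1)
  linarith [this.1]

lemma cos_sphDist {p q : E} (hp : ‖p‖ = 1) (hq : ‖q‖ = 1) :
    Real.cos (sphDist p q) = inner ℝ p q :=
  Real.cos_arccos (neg_one_le_inner hp hq) (inner_le_one hp hq)

/-- norm of the tangential projection. -/
lemma norm_sub_inner_smul {p q : E} (hp : ‖p‖ = 1) (hq : ‖q‖ = 1) :
    ‖q - (inner ℝ p q : ℝ) • p‖ = Real.sin (sphDist p q) := by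
  have h1 : (inner ℝ p q : ℝ) ≤ 1 := inner_le_one hp hq
  have h2 : (-1 : ℝ) ≤ inner ℝ p q := neg_one_le_inner hp hq
  rw [sphDist, Real.sin_arccos]
  have hsq : ‖q - (inner ℝ p q : ℝ) • p‖ ^ 2 = 1 - (inner ℝ p q : ℝ) ^ 2 := by
    rw [@norm_sub_sq_real, real_inner_smul_right, norm_smul, hp, hq, real_inner_comm q p]
    simp [abs_mul_abs_self]
    ring
  calc ‖q - (inner ℝ p q : ℝ) • p‖ = √(‖q - (inner ℝ p q : ℝ) • p‖ ^ 2) := by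
        rw [Real.sqrt_sq (norm_nonneg _)]
    _ = √(1 - (inner ℝ p q : ℝ) ^ 2) := by rw [hsq]

/-- chord is at most arc. -/
lemma norm_sub_le_sphDist {p q : E} (hp : ‖p‖ = 1) (hq : ‖q‖ = 1) :
    ‖q - p‖ ≤ sphDist p q := by
  have h1 : (inner ℝ p q : ℝ) ≤ 1 := inner_le_one hp hq
  have h2 : (-1 : ℝ) ≤ inner ℝ p q := neg_one_le_inner hp hq
  have hθ0 : 0 ≤ sphDist p q := Real.arccos_nonneg _
  have hcos : Real.cos (sphDist p q) = inner ℝ p q := cos_sphDist hp hq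
  have hsq : ‖q - p‖ ^ 2 ≤ (sphDist p q) ^ 2 := by
    have hexp : ‖q - p‖ ^ 2 = 2 - 2 * (inner ℝ p q : ℝ) := by
      rw [@norm_sub_sq_real]
      rw [hp, hq, real_inner_comm q p]; ring
    have := Real.one_sub_sq_div_two_le_cos (x := sphDist p q)
    rw [hcos] at this
    nlinarith
  calc ‖q - p‖ = √(‖q - p‖ ^ 2) := by rw [Real.sqrt_sq (norm_nonneg _)]
    _ ≤ √((sphDist p q) ^ 2) := Real.sqrt_le_sqrt hsq
    _ = sphDist p q := Real.sqrt_sq hθ0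

lemma arccos_le_arccos' {x y : ℝ} (h : x ≤ y) : Real.arccos y ≤ Real.arccos x := by
  rw [Real.arccos, Real.arccos]
  have := Real.monotone_arcsin h
  linarith

/-- spherical triangle inequality (when the sum of the two sides is ≤ π). -/
lemma sphDist_triangle {p x a : E} (hp : ‖p‖ = 1) (hx : ‖x‖ = 1) (ha : ‖a‖ = 1)
    (hsum : sphDist p x + sphDist p a ≤ Real.pi) :
    sphDist x a ≤ sphDist p x + sphDist p a := by
  set c1 : ℝ := inner ℝ p x with hc1
  set c2 : ℝ := inner ℝ p a with hc2
  have key : Real.cos (sphDist p x + sphDist p a) ≤ (inner ℝ x a : ℝ) := by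
    rw [Real.cos_add, cos_sphDist hp hx, cos_sphDist hp ha]
    have hcs : |(inner ℝ (x - c1 • p) (a - c2 • p) : ℝ)| ≤
        Real.sin (sphDist p x) * Real.sin (sphDist p a) := by
      calc |(inner ℝ (x - c1 • p) (a - c2 • p) : ℝ)| ≤ ‖x - c1 • p‖ * ‖a - c2 • p‖ :=
            abs_real_inner_le_norm _ _
        _ = Real.sin (sphDist p x) * Real.sin (sphDist p a) := by
            rw [norm_sub_inner_smul hp hx, norm_sub_inner_smul hp ha]
    have hexp : (inner ℝ (x - c1 • p) (a - c2 • p) : ℝ) = (inner ℝ x a : ℝ) - c1 * c2 := by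
      simp only [inner_sub_left, inner_sub_right, real_inner_smul_left,
        real_inner_smul_right, real_inner_self_eq_norm_sq, hp, real_inner_comm x p,
        real_inner_comm a p, hc1, hc2]
      ring
    rw [hexp] at hcs
    have := abs_le.mp hcs
    linarith [this.1]
  have := arccos_le_arccos' key
  calc sphDist x a ≤ Real.arccos (Real.cos (sphDist p x + sphDist p a)) := this
    _ = sphDist p x + sphDist p a := Real.arccos_cos
        (add_nonneg (Real.arccos_nonneg _) (Real.arccos_nonneg _)) hsum
end Geo

section Geo2
variable {d : ℕ}
local notation "E" => EuclideanSpace ℝ (Fin (d + 1))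

lemma id_sub_sin_monotone : Monotone (fun t : ℝ => t - Real.sin t) := by
  apply monotone_of_deriv_nonneg
  · fun_prop
  · intro t
    have hd : HasDerivAt (fun t : ℝ => t - Real.sin t) (1 - Real.cos t) t :=
      (hasDerivAt_id t).sub (Real.hasDerivAt_sin t)
    rw [hd.deriv]
    linarith [Real.cos_le_one t]

lemma sphLog_sub_proj {x q : E} (hx : ‖x‖ = 1) (hq : ‖q‖ = 1) :
    ‖sphLog x q - (q - (inner ℝ x q : ℝ) • x)‖ ≤ sphDist x q - Real.sin (sphDist x q) := by
  set θ := sphDist x q with hθ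
  have hθ0 : 0 ≤ θ := Real.arccos_nonneg _
  have hcos : Real.cos θ = inner ℝ x q := cos_sphDist hx hq
  have hv : ‖q - (inner ℝ x q : ℝ) • x‖ = Real.sin θ := norm_sub_inner_smul hx hq
  have hlog : sphLog x q = (θ / Real.sin θ) • (q - (inner ℝ x q : ℝ) • x) := by
    rw [sphLog, ← hθ, hcos]
  have hsin0 : 0 ≤ Real.sin θ := by
    rw [← hv]; exact norm_nonneg _
  rcases eq_or_lt_of_le hsin0 with h0 | hpos
  · have hv0 : q - (inner ℝ x q : ℝ) • x = 0 := by
      rw [← norm_eq_zero, hv, ← h0]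
    rw [hlog, hv0, smul_zero, sub_zero, norm_zero, ← h0]
    linarith
  · have hsinle : Real.sin θ ≤ θ := Real.sin_le hθ0
    have hone : (1:ℝ) ≤ θ / Real.sin θ := by
      rw [le_div_iff₀ hpos, one_mul]; exact hsinle
    have hrw : (θ / Real.sin θ) • (q - (inner ℝ x q : ℝ) • x) - (q - (inner ℝ x q : ℝ) • x)
        = (θ / Real.sin θ - 1) • (q - (inner ℝ x q : ℝ) • x) := by
      rw [sub_smul, one_smul]
    rw [hlog, hrw, norm_smul, hv, Real.norm_eq_abs, abs_of_nonneg (by linarith)]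
    rw [sub_mul, div_mul_cancel₀ _ (ne_of_gt hpos), one_mul]

lemma proj_contract {x : E} (y : E) (hx : ‖x‖ = 1) :
    ‖y - (inner ℝ x y : ℝ) • x‖ ≤ ‖y‖ := by
  have hsq : ‖y - (inner ℝ x y : ℝ) • x‖ ^ 2 = ‖y‖ ^ 2 - (inner ℝ x y : ℝ) ^ 2 := by
    rw [@norm_sub_sq_real, real_inner_smul_right, norm_smul, hx, real_inner_comm y x]
    simp [abs_mul_abs_self]
    ring
  have h1 : ‖y - (inner ℝ x y : ℝ) • x‖ ^ 2 ≤ ‖y‖ ^ 2 := by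
    rw [hsq]; nlinarith [sq_nonneg (inner ℝ x y : ℝ)]
  calc ‖y - (inner ℝ x y : ℝ) • x‖ = √(‖y - (inner ℝ x y : ℝ) • x‖ ^ 2) := by
        rw [Real.sqrt_sq (norm_nonneg _)]
    _ ≤ √(‖y‖ ^ 2) := Real.sqrt_le_sqrt h1
    _ = ‖y‖ := Real.sqrt_sq (norm_nonneg _)

lemma sphLog_sub_sphLog_le {x a b : E} (hx : ‖x‖ = 1) (ha : ‖a‖ = 1) (hb : ‖b‖ = 1) :
    ‖sphLog x a - sphLog x b‖ ≤ ‖a - b‖ + (sphDist x a - Real.sin (sphDist x a))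
      + (sphDist x b - Real.sin (sphDist x b)) := by
  have hdecomp : sphLog x a - sphLog x b =
      (sphLog x a - (a - (inner ℝ x a : ℝ) • x)) - (sphLog x b - (b - (inner ℝ x b : ℝ) • x))
      + ((a - b) - (inner ℝ x (a - b) : ℝ) • x) := by
    rw [inner_sub_right, sub_smul]
    abel
  rw [hdecomp]
  have h1 := sphLog_sub_proj hx ha
  have h2 := sphLog_sub_proj hx hb
  have h3 := proj_contract (a - b) hx
  calc _ ≤ ‖(sphLog x a - (a - (inner ℝ x a : ℝ) • x)) - (sphLog x b - (b - (inner ℝ x b : ℝ) • x))‖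
        + ‖(a - b) - (inner ℝ x (a - b) : ℝ) • x‖ := norm_add_le _ _
    _ ≤ (‖sphLog x a - (a - (inner ℝ x a : ℝ) • x)‖ + ‖sphLog x b - (b - (inner ℝ x b : ℝ) • x)‖)
        + ‖a - b‖ := add_le_add (norm_sub_le _ _) h3
    _ ≤ _ := by linarith

end Geo2


/-- Global sensitivity bound (Theorem 2) on the unit sphere: for datasets
`D = {x₁,…,xₙ}` and `D' = {x₁,…,x_{n-1},xₙ'}` in a geodesic ball `B_r(p₀)` with
`0 < r < π/4`, for every `x ∈ B_r(p₀)`,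
`‖(1/n)Σ log_x x_i − (1/n)(Σ_{i<n} log_x x_i + log_x xₙ')‖ ≤ (2r/n)(2 − 2r·cot(2r))`. -/
theorem sphere_mean_gradient_sensitivity (d n : ℕ) (hd : 1 ≤ d) (hn : 1 ≤ n)
    (r : ℝ) (hr0 : 0 < r) (hr : r < Real.pi / 4)
    (p₀ : EuclideanSpace ℝ (Fin (d + 1))) (hp₀ : ‖p₀‖ = 1)
    (xs : Fin n → EuclideanSpace ℝ (Fin (d + 1)))
    (hxs : ∀ i, ‖xs i‖ = 1 ∧ sphDist p₀ (xs i) < r)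
    (xn' : EuclideanSpace ℝ (Fin (d + 1)))
    (hxn' : ‖xn'‖ = 1 ∧ sphDist p₀ xn' < r)
    (xs' : Fin n → EuclideanSpace ℝ (Fin (d + 1)))
    (hxs' : xs' = Function.update xs ⟨n - 1, Nat.sub_lt hn one_pos⟩ xn')
    (x : EuclideanSpace ℝ (Fin (d + 1))) (hx : ‖x‖ = 1 ∧ sphDist p₀ x < r) :
    ‖(1 / (n : ℝ)) • ∑ i, sphLog x (xs i) - (1 / (n : ℝ)) • ∑ i, sphLog x (xs' i)‖ ≤
      (2 * r / n) * (2 - 2 * r * (Real.cos (2 * r) / Real.sin (2 * r))) := by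
  obtain ⟨hx1, hx2⟩ := hx
  obtain ⟨hb1, hb2⟩ := hxn'
  set k : Fin n := ⟨n - 1, Nat.sub_lt hn one_pos⟩ with hk
  set a := xs k with hadef
  obtain ⟨ha1, ha2⟩ := hxs k
  have hπ : 0 < Real.pi := Real.pi_pos
  -- sum manipulation
  have hupd : (fun i => sphLog x (xs' i)) = Function.update (fun i => sphLog x (xs i)) k
      (sphLog x xn') := by
    rw [hxs']
    ext i
    by_cases hi : i = k
    · subst hi; simp
    · simp [Function.update_of_ne hi]
  have hsum' : ∑ i, sphLog x (xs' i) =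
      sphLog x xn' + ∑ i ∈ Finset.univ \ {k}, sphLog x (xs i) := by
    calc ∑ i, sphLog x (xs' i)
        = ∑ i, Function.update (fun i => sphLog x (xs i)) k (sphLog x xn') i := by rw [hupd]
      _ = _ := Finset.sum_update_of_mem (Finset.mem_univ k) (fun i => sphLog x (xs i))
            (sphLog x xn')
  have hsum : ∑ i, sphLog x (xs i) =
      sphLog x a + ∑ i ∈ Finset.univ \ {k}, sphLog x (xs i) := by
    rw [Finset.sdiff_singleton_eq_erase]
    exact (Finset.add_sum_erase _ _ (Finset.mem_univ k)).symm
  have hdiff : ∑ i, sphLog x (xs i) - ∑ i, sphLog x (xs' i) = sphLog x a - sphLog x xn' := by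
    rw [hsum, hsum']; abel
  rw [← smul_sub, hdiff, norm_smul, Real.norm_eq_abs]
  have hn0 : (0:ℝ) < n := by exact_mod_cast hn
  rw [abs_of_nonneg (by positivity : (0:ℝ) ≤ 1 / n)]
  -- geodesic distances to x
  have hπsum : sphDist p₀ x + sphDist p₀ a ≤ Real.pi := by linarith
  have hπsum' : sphDist p₀ x + sphDist p₀ xn' ≤ Real.pi := by linarith
  have hθa : sphDist x a ≤ 2 * r :=
    le_trans (sphDist_triangle hp₀ hx1 ha1 hπsum) (by linarith)
  have hθb : sphDist x xn' ≤ 2 * r :=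
    le_trans (sphDist_triangle hp₀ hx1 hb1 hπsum') (by linarith)
  -- chord bound
  have hab : ‖a - xn'‖ ≤ 2 * r := by
    have htri := dist_triangle a p₀ xn'
    rw [dist_eq_norm, dist_eq_norm, dist_eq_norm, norm_sub_rev p₀ xn'] at htri
    have h1 := norm_sub_le_sphDist hp₀ ha1
    have h2 := norm_sub_le_sphDist hp₀ hb1
    linarith
  -- main geometric bound
  have hmain := sphLog_sub_sphLog_le hx1 ha1 hb1
  have hma : sphDist x a - Real.sin (sphDist x a) ≤ 2 * r - Real.sin (2 * r) :=
    id_sub_sin_monotone hθa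
  have hmb : sphDist x xn' - Real.sin (sphDist x xn') ≤ 2 * r - Real.sin (2 * r) :=
    id_sub_sin_monotone hθb
  have hw : ‖sphLog x a - sphLog x xn'‖ ≤ 6 * r - 2 * Real.sin (2 * r) := by
    calc ‖sphLog x a - sphLog x xn'‖ ≤ _ := hmain
      _ ≤ 6 * r - 2 * Real.sin (2 * r) := by linarith
  -- scalar inequality
  have hT0 : (0:ℝ) < 2 * r := by linarith
  have hT2 : 2 * r < Real.pi / 2 := by linarith
  have hs : 0 < Real.sin (2 * r) := Real.sin_pos_of_pos_of_lt_pi hT0 (by linarith)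
  have key := key_scalar hT0 hT2
  have hscalar : 6 * r - 2 * Real.sin (2 * r) ≤
      2 * r * (2 - 2 * r * (Real.cos (2 * r) / Real.sin (2 * r))) := by
    rw [← sub_nonneg]
    have heq : 2 * r * (2 - 2 * r * (Real.cos (2 * r) / Real.sin (2 * r)))
        - (6 * r - 2 * Real.sin (2 * r)) =
        (2 * Real.sin (2 * r) ^ 2 - (2 * r) * Real.sin (2 * r)
          - (2 * r) ^ 2 * Real.cos (2 * r)) / Real.sin (2 * r) := by
      field_simp
      ring
    rw [heq]
    apply div_nonneg _ hs.le
    nlinarith [key]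
  calc 1 / (n:ℝ) * ‖sphLog x a - sphLog x xn'‖
      ≤ 1 / (n:ℝ) * (6 * r - 2 * Real.sin (2 * r)) :=
        mul_le_mul_of_nonneg_left hw (by positivity)
    _ ≤ 1 / (n:ℝ) * (2 * r * (2 - 2 * r * (Real.cos (2 * r) / Real.sin (2 * r)))) :=
        mul_le_mul_of_nonneg_left hscalar (by positivity)
    _ = (2 * r / n) * (2 - 2 * r * (Real.cos (2 * r) / Real.sin (2 * r))) := by ring
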